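/- Let N and w be positive integers and let a_h = C(N-h, ⌊w/2⌋)·C(h-1, ⌈w/2⌉-1) for integers h. Then for all integers i ≤ m ≤ m' ≤ j with i + j = m + m', it holds that a_i·a_j ≤ a_m·a_{m'}. In particular, a product of J values a_{h_1}·a_{h_2}·…·a_{h_J} with fixed total sum h_1 + … + h_J is maximized when the weights h_i are as equal as possible. -/

import Mathlib

/-- Binomial coefficient on integers, with the convention that it is zero
when the lower index is negative or the upper index is negative. -/
def ichoose (n k : ℤ) : ℕ := if 0 ≤ n ∧ 0 ≤ k then n.toNat.choose k.toNat else 0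

/-- `aAcc N w h = C(N-h, ⌊w/2⌋)·C(h-1, ⌈w/2⌉-1)`, the input-output weight enumerator
of the length-`N` accumulator with input weight `w` and output weight `h`. -/
def aAcc (N w : ℕ) (h : ℤ) : ℕ :=
  ichoose ((N : ℤ) - h) ((w / 2 : ℕ) : ℤ) *
  ichoose (h - 1) ((((w + 1) / 2 : ℕ) : ℤ) - 1)

lemma nat_step (q a b : ℕ) (hqa : q ≤ a) (hab : a ≤ b) :
    a.choose q * (b + 1).choose q ≤ (a + 1).choose q * b.choose q := by
  have h1 : (a + 1).choose q * (a + 1 - q) = a.choose q * (a + 1) :=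
    (Nat.choose_mul_succ_eq a q).symm
  have h2 : (b + 1).choose q * (b + 1 - q) = b.choose q * (b + 1) :=
    (Nat.choose_mul_succ_eq b q).symm
  have hpos : 0 < (a + 1 - q) * (b + 1 - q) := by
    have : 0 < a + 1 - q := by omega
    have : 0 < b + 1 - q := by omega
    positivity
  apply Nat.le_of_mul_le_mul_right _ hpos
  obtain ⟨c, rfl⟩ : ∃ c, a = q + c := ⟨a - q, by omega⟩
  obtain ⟨d, rfl⟩ : ∃ d, b = q + d := ⟨b - q, by omega⟩
  have hcd : c ≤ d := by omega
  rw [show q + c + 1 - q = c + 1 from by omega] at h1 hpos ⊢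
  rw [show q + d + 1 - q = d + 1 from by omega] at h2 hpos ⊢
  calc (q + c).choose q * (q + d + 1).choose q * ((c + 1) * (d + 1))
      = ((q + c).choose q * (c + 1)) * ((q + d + 1).choose q * (d + 1)) := by ring
    _ = ((q + c).choose q * (c + 1)) * ((q + d).choose q * (q + d + 1)) := by rw [h2]
    _ ≤ ((q + c).choose q * (q + c + 1)) * ((q + d).choose q * (d + 1)) := by
        have : (c + 1) * (q + d + 1) ≤ (q + c + 1) * (d + 1) := by nlinarith
        calc ((q + c).choose q * (c + 1)) * ((q + d).choose q * (q + d + 1))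
            = ((q + c).choose q * (q + d).choose q) * ((c + 1) * (q + d + 1)) := by ring
          _ ≤ ((q + c).choose q * (q + d).choose q) * ((q + c + 1) * (d + 1)) :=
              Nat.mul_le_mul_left _ this
          _ = ((q + c).choose q * (q + c + 1)) * ((q + d).choose q * (d + 1)) := by ring
    _ = ((q + c + 1).choose q * (c + 1)) * ((q + d).choose q * (d + 1)) := by rw [h1]
    _ = (q + c + 1).choose q * (q + d).choose q * ((c + 1) * (d + 1)) := by ring

lemma ichoose_eq_zero_of_lt {x q : ℤ} (h : x < q) : ichoose x q = 0 := by
  unfold ichoose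
  split
  · next hc =>
    exact Nat.choose_eq_zero_of_lt (by omega)
  · rfl

lemma ichoose_step (q : ℤ) (hq : 0 ≤ q) (x y : ℤ) (hxy : x + 2 ≤ y) :
    ichoose x q * ichoose y q ≤ ichoose (x + 1) q * ichoose (y - 1) q := by
  rcases lt_or_ge x q with hx | hx
  · rw [ichoose_eq_zero_of_lt hx, Nat.zero_mul]
    exact Nat.zero_le _
  · have hx0 : 0 ≤ x := le_trans hq hx
    have hy0 : 0 ≤ y := by omega
    have key := nat_step q.toNat x.toNat (y.toNat - 1) (by omega) (by omega)
    have e1 : y.toNat - 1 + 1 = y.toNat := by omega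
    rw [e1] at key
    have u1 : ichoose x q = x.toNat.choose q.toNat := by simp [ichoose, hx0, hq]
    have u2 : ichoose y q = y.toNat.choose q.toNat := by simp [ichoose, hy0, hq]
    have u3 : ichoose (x + 1) q = (x.toNat + 1).choose q.toNat := by
      have : (x + 1).toNat = x.toNat + 1 := by omega
      simp [ichoose, hq, show (0:ℤ) ≤ x + 1 by omega, this]
    have u4 : ichoose (y - 1) q = (y.toNat - 1).choose q.toNat := by
      have : (y - 1).toNat = y.toNat - 1 := by omega
      simp [ichoose, hq, show (0:ℤ) ≤ y - 1 by omega, this]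
      intro h; omega
    rw [u1, u2, u3, u4]
    exact key

lemma aAcc_step (N w : ℕ) (hw : 0 < w) (x y : ℤ) (hxy : x + 2 ≤ y) :
    aAcc N w x * aAcc N w y ≤ aAcc N w (x + 1) * aAcc N w (y - 1) := by
  unfold aAcc
  set p : ℤ := ((w / 2 : ℕ) : ℤ) with hp
  set q : ℤ := (((w + 1) / 2 : ℕ) : ℤ) - 1 with hq
  have hp0 : 0 ≤ p := Int.natCast_nonneg _
  have hq0 : 0 ≤ q := by
    have : 1 ≤ (w + 1) / 2 := by omega
    simp only [hq]
    omega
  have hf : ichoose ((N : ℤ) - y) p * ichoose ((N : ℤ) - x) p ≤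
      ichoose ((N : ℤ) - y + 1) p * ichoose ((N : ℤ) - x - 1) p :=
    ichoose_step p hp0 _ _ (by omega)
  have hg : ichoose (x - 1) q * ichoose (y - 1) q ≤
      ichoose x q * ichoose (y - 2) q := by
    have hg0 := ichoose_step q hq0 (x - 1) (y - 1) (by omega)
    rw [show x - 1 + 1 = x from by ring, show y - 1 - 1 = y - 2 from by ring] at hg0
    exact hg0
  have e1 : (N : ℤ) - (x + 1) = (N : ℤ) - x - 1 := by ring
  have e2 : (N : ℤ) - (y - 1) = (N : ℤ) - y + 1 := by ring
  have e3 : x + 1 - 1 = x := by ring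
  have e4 : y - 1 - 1 = y - 2 := by ring
  rw [e1, e2, e3, e4]
  calc ichoose ((N:ℤ) - x) p * ichoose (x - 1) q * (ichoose ((N:ℤ) - y) p * ichoose (y - 1) q)
      = (ichoose ((N:ℤ) - y) p * ichoose ((N:ℤ) - x) p) * (ichoose (x - 1) q * ichoose (y - 1) q) := by ring
    _ ≤ (ichoose ((N:ℤ) - y + 1) p * ichoose ((N:ℤ) - x - 1) p) * (ichoose x q * ichoose (y - 2) q) :=
        Nat.mul_le_mul hf hg
    _ = ichoose ((N:ℤ) - x - 1) p * ichoose x q * (ichoose ((N:ℤ) - y + 1) p * ichoose (y - 2) q) := by ring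

lemma aAcc_key (N w : ℕ) (hw : 0 < w) : ∀ n : ℕ, ∀ i m m' j : ℤ, i ≤ m → m ≤ m' → m' ≤ j →
    i + j = m + m' → (m - i).toNat = n →
    aAcc N w i * aAcc N w j ≤ aAcc N w m * aAcc N w m' := by
  intro n
  induction n with
  | zero =>
    intro i m m' j him hmm' hm'j hsum hn
    have : i = m := by omega
    subst this
    have : j = m' := by omega
    subst this
    exact le_refl _
  | succ n ih =>
    intro i m m' j him hmm' hm'j hsum hn
    have hi : i < m := by omega
    have hj : m' < j := by omega
    have step := aAcc_step N w hw i j (by omega)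
    refine le_trans step (ih (i + 1) m m' (j - 1) (by omega) hmm' (by omega) (by omega) (by omega))

theorem stmt_17 (N w : ℕ) (hN : 0 < N) (hw : 0 < w)
    (i m m' j : ℤ) (him : i ≤ m) (hmm' : m ≤ m') (hm'j : m' ≤ j)
    (hsum : i + j = m + m') :
    aAcc N w i * aAcc N w j ≤ aAcc N w m * aAcc N w m' := by
  exact aAcc_key N w hw (m - i).toNat i m m' j him hmm' hm'j hsum rfl
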